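/- arXiv:1908.06699 — 6 statements merged into one kernel-verified Lean document; each statement's English description precedes it below -/
import Mathlib

section
/- Let c ≥ 1, let h : {1,…,c} → ℝ satisfy h_k > 0 for all k, and let r > 1. Then for every α in the probability simplex Δ_c, one has Σ_{k=1}^c h_k α_k^r ≥ (Σ_{k=1}^c h_k^{1/(1−r)})^{1−r}. -/
/-- Lower bound for the fuzzy assignment objective over the probability simplex:
for `h_k > 0` and `r > 1`, every `α ∈ Δ_c` satisfies
`Σ h_k α_k^r ≥ (Σ h_k^{1/(1−r)})^{1−r}`. -/
theorem fuzzy_objective_lower_bound (c : ℕ) (hc : 1 ≤ c)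
    (h : Fin c → ℝ) (hpos : ∀ k, 0 < h k) (r : ℝ) (hr : 1 < r)
    (α : Fin c → ℝ) (hα : ∀ k, 0 ≤ α k) (hsum : ∑ k, α k = 1) :
    (∑ k, (h k) ^ (1 / (1 - r))) ^ (1 - r) ≤ ∑ k, h k * (α k) ^ r := by
  have hr0 : (0:ℝ) < r := lt_trans one_pos hr
  set w : Fin c → ℝ := fun k => (h k) ^ (1 / (1 - r)) with hw
  have hwpos : ∀ k, 0 < w k := fun k => Real.rpow_pos_of_pos (hpos k) _
  set f : Fin c → ℝ := fun k => α k / w k with hf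
  have hfnn : ∀ k, 0 ≤ f k := fun k => div_nonneg (hα k) (hwpos k).le
  have key := Real.inner_le_weight_mul_Lp_of_nonneg Finset.univ hr.le w f
    (fun k => (hwpos k).le) hfnn
  have hwf : ∀ k, w k * f k = α k := fun k => mul_div_cancel₀ _ (hwpos k).ne'
  have hwfr : ∀ k, w k * (f k) ^ r = h k * (α k) ^ r := by
    intro k
    rw [hf, hw]
    simp only
    rw [Real.div_rpow (hα k) (hwpos k).le, mul_div_assoc']
    rw [← Real.rpow_mul (hpos k).le]
    rw [div_eq_iff (Real.rpow_pos_of_pos (hpos k) _).ne']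
    have h1r : (1:ℝ) - r ≠ 0 := by intro hz; linarith [hr]
    have hhe : h k ^ (1/(1-r)) = h k * h k ^ ((1/(1-r))*r) := by
      have hadd := Real.rpow_add (hpos k) 1 ((1/(1-r))*r)
      rw [Real.rpow_one] at hadd
      rw [← hadd]
      congr 1
      field_simp
      ring
    rw [hhe]; ring
  simp only [hwfr] at key
  have hsum1 : ∑ k, w k * f k = 1 := by simp only [hwf]; exact hsum
  rw [hsum1] at key
  set T : ℝ := ∑ k, w k with hT
  have hTpos : 0 < T := Finset.sum_pos (fun k _ => hwpos k)
    (Finset.univ_nonempty_iff.mpr (Fin.pos_iff_nonempty.mp hc))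
  set S : ℝ := ∑ k, h k * (α k) ^ r with hS
  have hSnn : 0 ≤ S := Finset.sum_nonneg fun k _ =>
    mul_nonneg (hpos k).le (Real.rpow_nonneg (hα k) r)
  -- key : 1 ≤ T ^ (1 - r⁻¹) * S ^ r⁻¹
  have hTp : 0 < T ^ (1 - r⁻¹) := Real.rpow_pos_of_pos hTpos _
  have h2 : T ^ (r⁻¹ - 1) ≤ S ^ r⁻¹ := by
    have : (T ^ (1 - r⁻¹))⁻¹ ≤ S ^ r⁻¹ := by
      rw [inv_le_iff_one_le_mul₀ hTp]
      linarith [key]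
    calc T ^ (r⁻¹ - 1) = (T ^ (1 - r⁻¹))⁻¹ := by
          rw [← Real.rpow_neg hTpos.le]; ring_nf
      _ ≤ S ^ r⁻¹ := this
  have h3 := Real.rpow_le_rpow (Real.rpow_nonneg hTpos.le _) h2 hr0.le
  rw [← Real.rpow_mul hTpos.le, ← Real.rpow_mul hSnn] at h3
  have e1 : (r⁻¹ - 1) * r = 1 - r := by field_simp
  have e2 : r⁻¹ * r = 1 := inv_mul_cancel₀ hr0.ne'
  rw [e1, e2, Real.rpow_one] at h3
  exact h3
end

section
/- Let c ≥ 1, let h : {1,…,c} → ℝ satisfy h_k > 0 for all k, and let r > 1. Then the vector α* with entries α*_k = h_k^{1/(1−r)} / (Σ_{s=1}^c h_s^{1/(1−r)}) is a global minimizer of the fuzzy assignment objective f_h(α) = Σ_{k=1}^c h_k α_k^r over the probability simplex Δ_c; i.e., for all α ∈ Δ_c, f_h(α*) ≤ f_h(α). -/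
/-- The closed-form point `α*_k = h_k^{1/(1−r)} / Σ_s h_s^{1/(1−r)}` is a global minimizer of
the fuzzy assignment objective `f_h(α) = Σ_k h_k α_k^r` over the probability simplex. -/
theorem fuzzy_optimal_point_is_minimizer (c : ℕ) (hc : 1 ≤ c)
    (h : Fin c → ℝ) (hpos : ∀ k, 0 < h k) (r : ℝ) (hr : 1 < r)
    (α : Fin c → ℝ) (hα : ∀ k, 0 ≤ α k) (hsum : ∑ k, α k = 1) :
    ∑ k, h k * ((h k) ^ (1 / (1 - r)) / ∑ s, (h s) ^ (1 / (1 - r))) ^ r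
      ≤ ∑ k, h k * (α k) ^ r := by
  have hne : (1 : ℝ) - r ≠ 0 := by linarith
  set β : Fin c → ℝ := fun k => h k ^ (1 / (1 - r)) with hβ
  have hβpos : ∀ k, 0 < β k := fun k => Real.rpow_pos_of_pos (hpos k) _
  have hnonempty : Nonempty (Fin c) := Fin.pos_iff_nonempty.mp hc
  set S : ℝ := ∑ s, β s with hSdef
  have hS : 0 < S := Finset.sum_pos (fun i _ => hβpos i) Finset.univ_nonempty
  -- key identity : h k * β k ^ r = β k
  have hkey : ∀ k, h k * β k ^ r = β k := by
    intro k
    have hk := hpos k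
    simp only [hβ]
    rw [← Real.rpow_mul hk.le]
    nth_rewrite 1 [← Real.rpow_one (h k)]
    rw [← Real.rpow_add hk]
    congr 1
    field_simp
    ring
  -- LHS equals S ^ (1 - r)
  have hLHS : ∑ k, h k * (β k / S) ^ r = S ^ (1 - r) := by
    have : ∀ k, h k * (β k / S) ^ r = β k / S ^ r := by
      intro k
      rw [Real.div_rpow (hβpos k).le hS.le, ← mul_div_assoc, hkey k]
    rw [Finset.sum_congr rfl fun k _ => this k, ← Finset.sum_div]
    rw [Real.rpow_sub hS, Real.rpow_one]
  rw [hLHS]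
  -- weights
  set w : Fin c → ℝ := fun k => β k / S with hw
  have hwpos : ∀ k, 0 < w k := fun k => div_pos (hβpos k) hS
  have hwsum : ∑ k, w k = 1 := by
    rw [hw]; rw [← Finset.sum_div]; field_simp; exact hSdef.symm
  set z : Fin c → ℝ := fun k => α k / w k with hz
  have hαeq : ∀ k, α k = w k * z k := by
    intro k; simp only [hz]; rw [mul_comm, div_mul_cancel₀ _ (hwpos k).ne']
  have hjensen : (∑ k, w k * z k) ^ r ≤ ∑ k, w k * z k ^ r :=
    Real.rpow_arith_mean_le_arith_mean_rpow Finset.univ w z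
      (fun i _ => (hwpos i).le) hwsum
      (fun i _ => div_nonneg (hα i) (hwpos i).le) hr.le
  have hwz : ∑ k, w k * z k = 1 := by
    rw [← hsum]; exact Finset.sum_congr rfl fun k _ => (hαeq k).symm
  rw [hwz, Real.one_rpow] at hjensen
  -- rewrite RHS
  have hRHS : ∀ k, h k * α k ^ r = S ^ (1 - r) * (w k * z k ^ r) := by
    intro k
    rw [hαeq k, Real.mul_rpow (hwpos k).le (div_nonneg (hα k) (hwpos k).le)]
    have : h k * w k ^ r = S ^ (1 - r) * w k := by
      rw [hw, Real.div_rpow (hβpos k).le hS.le, ← mul_div_assoc, hkey k,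
        Real.rpow_sub hS, Real.rpow_one]
      field_simp
    calc h k * (w k ^ r * z k ^ r) = (h k * w k ^ r) * z k ^ r := by ring
      _ = S ^ (1 - r) * w k * z k ^ r := by rw [this]
      _ = S ^ (1 - r) * (w k * z k ^ r) := by ring
  calc S ^ (1 - r) = S ^ (1 - r) * 1 := by ring
    _ ≤ S ^ (1 - r) * ∑ k, w k * z k ^ r := by
        apply mul_le_mul_of_nonneg_left hjensen (Real.rpow_nonneg hS.le _)
    _ = ∑ k, S ^ (1 - r) * (w k * z k ^ r) := by rw [Finset.mul_sum]
    _ = ∑ k, h k * α k ^ r := Finset.sum_congr rfl fun k _ => (hRHS k).symm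
end

section
/- Let c ≥ 1, let h : {1,…,c} → ℝ satisfy h_k > 0 for all k, let r > 1, let 1 ≤ K̃ ≤ c, and let σ be a permutation of {1,…,c} with h_{σ(1)} ≤ ⋯ ≤ h_{σ(c)}. Define α* ∈ ℝ^c by α*_{σ(k)} = h_{σ(k)}^{1/(1−r)} / (Σ_{s=1}^{K̃} h_{σ(s)}^{1/(1−r)}) for 1 ≤ k ≤ K̃ and α*_{σ(k)} = 0 for K̃ < k ≤ c. Then α* lies in the probability simplex Δ_c, α* has exactly K̃ nonzero entries, and for every α ∈ Δ_c with at most K̃ nonzero entries one has Σ_{k=1}^c h_k (α*_k)^r ≤ Σ_{k=1}^c h_k α_k^r. -/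
open scoped Classical

lemma sum_le_sum_range_of_antitone (F : ℕ → ℝ) (hFa : ∀ i j, i ≤ j → F j ≤ F i)
    (hF0 : ∀ i, 0 ≤ F i) :
    ∀ (K : ℕ) (A : Finset ℕ), A.card ≤ K → ∑ i ∈ A, F i ≤ ∑ i ∈ Finset.range K, F i := by
  intro K
  induction K with
  | zero =>
    intro A hA
    have : A = ∅ := Finset.card_eq_zero.mp (Nat.le_zero.mp hA)
    simp [this]
  | succ K ih =>
    intro A hA
    by_cases hsub : A ⊆ Finset.range (K+1)
    · exact Finset.sum_le_sum_of_subset_of_nonneg hsub (fun i _ _ => hF0 i)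
    · obtain ⟨m, hmA, hmR⟩ := Finset.not_subset.mp hsub
      have hmK : K ≤ m := by simp [Finset.mem_range] at hmR; omega
      have hcard : (A.erase m).card ≤ K := by
        rw [Finset.card_erase_of_mem hmA]; omega
      calc ∑ i ∈ A, F i = ∑ i ∈ A.erase m, F i + F m := (Finset.sum_erase_add _ _ hmA).symm
        _ ≤ ∑ i ∈ Finset.range K, F i + F K := add_le_add (ih _ hcard) (hFa K m hmK)
        _ = ∑ i ∈ Finset.range (K+1), F i := (Finset.sum_range_succ F K).symm

/-- Closed-form solution (equation (16) of the paper) of the `L₀`-constrained simplex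
subproblem: the vector `α*` supported on the `K̃` indices with smallest `h`-values, with
`α*_{σ(k)} = h_{σ(k)}^{1/(1−r)} / Σ_{s≤K̃} h_{σ(s)}^{1/(1−r)}` there and `0` elsewhere, lies in
the probability simplex, has exactly `K̃` nonzero entries, and minimizes `Σ_k h_k α_k^r` among
all simplex vectors with at most `K̃` nonzero entries. -/
theorem l0_constrained_closed_form (c : ℕ) (hc : 1 ≤ c)
    (h : Fin c → ℝ) (hpos : ∀ k, 0 < h k) (r : ℝ) (hr : 1 < r)
    (Kt : ℕ) (hK1 : 1 ≤ Kt) (hKc : Kt ≤ c)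
    (σ : Equiv.Perm (Fin c)) (hsort : ∀ k l : Fin c, k ≤ l → h (σ k) ≤ h (σ l))
    (αstar : Fin c → ℝ)
    (hαstar : ∀ j : Fin c, αstar j =
      if ((σ.symm j : ℕ) < Kt) then
        (h j) ^ (1 / (1 - r)) /
          ∑ s ∈ Finset.univ.filter (fun s : Fin c => (s : ℕ) < Kt),
            (h (σ s)) ^ (1 / (1 - r))
      else 0) :
    (∀ k, 0 ≤ αstar k) ∧ (∑ k, αstar k = 1) ∧
    (Finset.univ.filter (fun k : Fin c => αstar k ≠ 0)).card = Kt ∧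
    (∀ α : Fin c → ℝ, (∀ k, 0 ≤ α k) → (∑ k, α k = 1) →
      (Finset.univ.filter (fun k : Fin c => α k ≠ 0)).card ≤ Kt →
      ∑ k, h k * (αstar k) ^ r ≤ ∑ k, h k * (α k) ^ r) := by
  have hr0 : (0:ℝ) < r := by linarith
  have h1r : (1:ℝ) - r ≠ 0 := by intro hh; linarith [sub_eq_zero.mp hh]
  set e : ℝ := 1 / (1 - r) with he
  have he_neg : e < 0 := div_neg_of_pos_of_neg one_pos (by linarith)
  set g : Fin c → ℝ := fun j => h j ^ e with hgdef
  have hg : ∀ j, 0 < g j := fun j => Real.rpow_pos_of_pos (hpos j) e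
  set P : Fin c → Prop := fun s => (s : ℕ) < Kt with hP
  set T : ℝ := ∑ s ∈ Finset.univ.filter (fun s : Fin c => (s : ℕ) < Kt), g (σ s) with hT
  have hfilter_ne : (Finset.univ.filter (fun s : Fin c => (s : ℕ) < Kt)).Nonempty := by
    refine ⟨⟨0, lt_of_lt_of_le hK1 hKc⟩, ?_⟩
    simp only [Finset.mem_filter, Finset.mem_univ, true_and]
    exact hK1
  have hTpos : 0 < T :=
    Finset.sum_pos (fun i _ => hg (σ i)) hfilter_ne
  -- rewrite αstar at σ k
  have hαs : ∀ k : Fin c, αstar (σ k) = if (k:ℕ) < Kt then g (σ k) / T else 0 := by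
    intro k
    rw [hαstar (σ k)]
    simp only [Equiv.symm_apply_apply]
    rfl
  -- nonneg
  have hnn : ∀ k, 0 ≤ αstar k := by
    intro k
    rw [hαstar k]
    split
    · exact div_nonneg (Real.rpow_nonneg (hpos k).le e) hTpos.le
    · exact le_refl 0
  -- sum = 1
  have hsum1 : ∑ k, αstar k = 1 := by
    rw [← Equiv.sum_comp σ αstar]
    rw [Finset.sum_congr rfl (fun k _ => hαs k), ← Finset.sum_filter, ← Finset.sum_div]
    exact div_self hTpos.ne'
  -- card of filter (val < Kt)
  have hfilter_map : (Finset.univ.filter (fun s : Fin c => (s : ℕ) < Kt))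
      = Finset.univ.map (Fin.castLEEmb hKc) := by
    ext j
    simp only [Finset.mem_filter, Finset.mem_univ, true_and, Finset.mem_map,
      Fin.coe_castLEEmb]
    constructor
    · intro hj; exact ⟨⟨(j : ℕ), hj⟩, Fin.ext rfl⟩
    · rintro ⟨i, rfl⟩
      exact i.isLt
  have hcard_lt : (Finset.univ.filter (fun s : Fin c => (s : ℕ) < Kt)).card = Kt := by
    rw [hfilter_map, Finset.card_map, Finset.card_univ, Fintype.card_fin]
  -- support of αstar
  have hsupp_iff : ∀ j, αstar j ≠ 0 ↔ (σ.symm j : ℕ) < Kt := by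
    intro j
    rw [hαstar j]
    by_cases hj : (σ.symm j : ℕ) < Kt
    · simp only [hj, if_true, iff_true]
      exact (div_pos (Real.rpow_pos_of_pos (hpos j) e) hTpos).ne'
    · simp [hj]
  have hsupp_card : (Finset.univ.filter (fun k : Fin c => αstar k ≠ 0)).card = Kt := by
    have heq : (Finset.univ.filter (fun k : Fin c => αstar k ≠ 0))
        = (Finset.univ.filter (fun s : Fin c => (s : ℕ) < Kt)).map σ.toEmbedding := by
      ext j
      simp only [Finset.mem_filter, Finset.mem_univ, true_and, Finset.mem_map,
        Equiv.coe_toEmbedding, hsupp_iff]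
      constructor
      · intro hj; exact ⟨σ.symm j, hj, σ.apply_symm_apply j⟩
      · rintro ⟨k, hk, rfl⟩; simpa using hk
    rw [heq, Finset.card_map, hcard_lt]
  refine ⟨hnn, hsum1, hsupp_card, ?_⟩
  -- key algebraic identities
  have her : 1 + e * r = e := by
    rw [he]; field_simp; ring
  have hkey : ∀ j, h j * (g j) ^ r = g j := by
    intro j
    show h j * (h j ^ e) ^ r = h j ^ e
    rw [← Real.rpow_mul (hpos j).le]
    calc h j * h j ^ (e * r) = h j ^ (1:ℝ) * h j ^ (e * r) := by rw [Real.rpow_one]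
      _ = h j ^ (1 + e * r) := (Real.rpow_add (hpos j) 1 (e*r)).symm
      _ = h j ^ e := by rw [her]
  -- value of the objective at αstar
  have hval : ∑ k, h k * (αstar k) ^ r = T ^ (1 - r) := by
    rw [← Equiv.sum_comp σ (fun k => h k * (αstar k) ^ r)]
    have hterm : ∀ k : Fin c, h (σ k) * (αstar (σ k)) ^ r
        = if (k:ℕ) < Kt then g (σ k) / T ^ r else 0 := by
      intro k
      rw [hαs k]
      split
      · rw [Real.div_rpow (hg (σ k)).le hTpos.le, ← mul_div_assoc, hkey]
      · rw [Real.zero_rpow hr0.ne', mul_zero]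
    rw [Finset.sum_congr rfl (fun k _ => hterm k), ← Finset.sum_filter,
      ← Finset.sum_div, ← hT, Real.rpow_sub hTpos, Real.rpow_one]
  intro α hα0 hα1 hαK
  set A : Finset (Fin c) := Finset.univ.filter (fun k => α k ≠ 0) with hA
  have hAne : A.Nonempty := by
    rcases Finset.eq_empty_or_nonempty A with hemp | hne
    · exfalso
      have : ∀ k, α k = 0 := by
        intro k
        by_contra hk
        have : k ∈ A := by simp [hA, hk]
        simp [hemp] at this
      rw [Finset.sum_congr rfl (fun k _ => this k)] at hα1
      simp at hα1
    · exact hne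
  set Sa : ℝ := ∑ k ∈ A, g k with hSa
  have hSapos : 0 < Sa := Finset.sum_pos (fun i _ => hg i) hAne
  have hαA : ∀ k ∉ A, α k = 0 := by
    intro k hk
    by_contra hk'
    exact hk (by simp [hA, hk'])
  -- Jensen / Hölder step : Sa ^ (1 - r) ≤ ∑ k, h k * α k ^ r
  have hjensen : Sa ^ (1 - r) ≤ ∑ k, h k * (α k) ^ r := by
    set w : Fin c → ℝ := fun k => g k / Sa with hw
    set z : Fin c → ℝ := fun k => α k * (Sa / g k) with hz
    have hw0 : ∀ k ∈ A, (0:ℝ) ≤ w k := fun k _ => div_nonneg (hg k).le hSapos.le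
    have hw1 : ∑ k ∈ A, w k = 1 := by
      rw [hw, ← Finset.sum_div, ← hSa, div_self hSapos.ne']
    have hz0 : ∀ k ∈ A, (0:ℝ) ≤ z k :=
      fun k _ => mul_nonneg (hα0 k) (div_nonneg hSapos.le (hg k).le)
    have hwz : ∀ k, w k * z k = α k := by
      intro k
      rw [hw, hz]
      field_simp [(hg k).ne', hSapos.ne']
    have hJ := Real.rpow_arith_mean_le_arith_mean_rpow A w z hw0 hw1 hz0 hr.le
    have hsum_wz : ∑ k ∈ A, w k * z k = 1 := by
      rw [Finset.sum_congr rfl (fun k _ => hwz k)]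
      rw [← hα1]
      exact Finset.sum_subset (Finset.subset_univ A) (fun k _ hk => hαA k hk)
    rw [hsum_wz, Real.one_rpow] at hJ
    have hterm2 : ∀ k ∈ A, w k * z k ^ r = Sa ^ (r - 1) * (h k * α k ^ r) := by
      intro k _
      have hSa_pow : Sa ^ r / Sa = Sa ^ (r - 1) := by
        nth_rewrite 2 [← Real.rpow_one Sa]
        rw [← Real.rpow_sub hSapos]
      have hg_pow : g k / g k ^ r = h k := by
        nth_rewrite 1 [← Real.rpow_one (g k)]
        rw [← Real.rpow_sub (hg k)]
        show ((h k) ^ e) ^ ((1:ℝ) - r) = h k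
        rw [← Real.rpow_mul (hpos k).le]
        have he1 : e * (1 - r) = 1 := by rw [he]; field_simp
        rw [he1, Real.rpow_one]
      rw [hw, hz, Real.mul_rpow (hα0 k) (div_nonneg hSapos.le (hg k).le),
        Real.div_rpow hSapos.le (hg k).le]
      have hrw : g k / Sa * (α k ^ r * (Sa ^ r / g k ^ r))
          = Sa ^ r / Sa * ((g k / g k ^ r) * α k ^ r) := by
        field_simp
      rw [hrw, hSa_pow, hg_pow]
    rw [Finset.sum_congr rfl hterm2, ← Finset.mul_sum] at hJ
    have hApow : 0 < Sa ^ (r - 1) := Real.rpow_pos_of_pos hSapos _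
    have h2 : (1:ℝ) / Sa ^ (r - 1) ≤ ∑ k ∈ A, h k * α k ^ r := by
      rw [div_le_iff₀ hApow, mul_comm]
      exact hJ
    have h3 : Sa ^ (1 - r) = 1 / Sa ^ (r - 1) := by
      rw [show (1:ℝ) - r = -(r - 1) by ring, Real.rpow_neg hSapos.le, one_div]
    have h4 : ∑ k ∈ A, h k * α k ^ r = ∑ k, h k * α k ^ r := by
      refine Finset.sum_subset (Finset.subset_univ A) ?_
      intro k _ hk
      rw [hαA k hk, Real.zero_rpow hr0.ne', mul_zero]
    rw [h3]
    rw [h4] at h2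
    exact h2
  -- sorting step : Sa ≤ T
  have hSaT : Sa ≤ T := by
    set F : ℕ → ℝ := fun i => if hi : i < c then g (σ ⟨i, hi⟩) else 0 with hF
    have hF0 : ∀ i, 0 ≤ F i := by
      intro i
      simp only [hF]
      split
      · exact (hg _).le
      · exact le_rfl
    have hFa : ∀ i j, i ≤ j → F j ≤ F i := by
      intro i j hij
      by_cases hj : j < c
      · have hi : i < c := lt_of_le_of_lt hij hj
        simp only [hF, dif_pos hi, dif_pos hj]
        exact Real.rpow_le_rpow_of_nonpos (hpos _)
          (hsort ⟨i, hi⟩ ⟨j, hj⟩ (Fin.mk_le_mk.mpr hij)) he_neg.le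
      · simp only [hF, dif_neg hj]
        exact hF0 i
    set B : Finset ℕ := A.image (fun k => ((σ.symm k : Fin c) : ℕ)) with hB
    have hinj : Set.InjOn (fun k => ((σ.symm k : Fin c) : ℕ)) A := by
      intro k _ k' _ hkk'
      exact σ.symm.injective.eq_iff.mp (Fin.val_injective hkk')
    have hSaB : Sa = ∑ i ∈ B, F i := by
      rw [hB, Finset.sum_image hinj, hSa]
      refine Finset.sum_congr rfl ?_
      intro k _
      rw [hF]
      simp only [(σ.symm k).isLt, dif_pos, Fin.eta, Equiv.apply_symm_apply]
    have hcardB : B.card ≤ Kt := le_trans Finset.card_image_le hαK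
    have hmain := sum_le_sum_range_of_antitone F hFa hF0 Kt B hcardB
    have hTF : ∑ i ∈ Finset.range Kt, F i = T := by
      rw [hT, hfilter_map, Finset.sum_map, ← Fin.sum_univ_eq_sum_range F Kt]
      refine Finset.sum_congr rfl ?_
      intro i _
      have hi : (i : ℕ) < c := lt_of_lt_of_le i.isLt hKc
      rw [hF]
      simp only [hi, dif_pos]
      rfl
    rw [hSaB]
    rw [← hTF]
    exact hmain
  -- conclude
  calc ∑ k, h k * (αstar k) ^ r = T ^ (1 - r) := hval
    _ ≤ Sa ^ (1 - r) := Real.rpow_le_rpow_of_nonpos hSapos hSaT (by linarith)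
    _ ≤ ∑ k, h k * (α k) ^ r := hjensen
end

section
/- Let x_1, …, x_n ∈ ℝ^d, let b_1, …, b_c ∈ ℝ^d with x_i ≠ b_k for all i, k, let b'_1, …, b'_c ∈ ℝ^d be arbitrary, and let w_{ik} ≥ 0 for all i, k. If Σ_{i=1}^n Σ_{k=1}^c w_{ik} ‖x_i − b'_k‖₂² / (2‖x_i − b_k‖₂) ≤ Σ_{i=1}^n Σ_{k=1}^c w_{ik} ‖x_i − b_k‖₂² / (2‖x_i − b_k‖₂), then Σ_{i=1}^n Σ_{k=1}^c w_{ik} ‖x_i − b'_k‖₂ ≤ Σ_{i=1}^n Σ_{k=1}^c w_{ik} ‖x_i − b_k‖₂. -/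
/-- From inequality (22) to inequality (24) of the paper via Lemma 1: if the reweighted
quadratic objective does not increase, then neither does the robust `L₂,₁`-type objective. -/
theorem quadratic_descent_implies_robust_descent (d n c : ℕ)
    (x : Fin n → EuclideanSpace ℝ (Fin d)) (b : Fin c → EuclideanSpace ℝ (Fin d))
    (hne : ∀ i k, x i ≠ b k)
    (b' : Fin c → EuclideanSpace ℝ (Fin d))
    (w : Fin n → Fin c → ℝ) (hw : ∀ i k, 0 ≤ w i k)
    (hquad : ∑ i, ∑ k, w i k * ‖x i - b' k‖ ^ 2 / (2 * ‖x i - b k‖)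
      ≤ ∑ i, ∑ k, w i k * ‖x i - b k‖ ^ 2 / (2 * ‖x i - b k‖)) :
    ∑ i, ∑ k, w i k * ‖x i - b' k‖ ≤ ∑ i, ∑ k, w i k * ‖x i - b k‖ := by
  have hv : ∀ i k, (0:ℝ) < ‖x i - b k‖ := fun i k =>
    norm_pos_iff.mpr (sub_ne_zero.mpr (hne i k))
  have key : ∀ i k, w i k * ‖x i - b' k‖ ≤
      w i k * ‖x i - b' k‖ ^ 2 / (2 * ‖x i - b k‖) + w i k * ‖x i - b k‖ / 2 := by
    intro i k
    have hvik := hv i k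
    have hwik := hw i k
    rw [div_add_div _ _ (by positivity) (by norm_num : (2:ℝ) ≠ 0),
      le_div_iff₀ (by positivity)]
    nlinarith [sq_nonneg (‖x i - b' k‖ - ‖x i - b k‖), mul_nonneg hwik (sq_nonneg (‖x i - b' k‖ - ‖x i - b k‖))]
  have key2 : ∀ i k, w i k * ‖x i - b k‖ ^ 2 / (2 * ‖x i - b k‖) + w i k * ‖x i - b k‖ / 2
      = w i k * ‖x i - b k‖ := by
    intro i k
    have hvik := (hv i k).ne'
    field_simp
    ring
  calc ∑ i, ∑ k, w i k * ‖x i - b' k‖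
      ≤ ∑ i, ∑ k, (w i k * ‖x i - b' k‖ ^ 2 / (2 * ‖x i - b k‖) + w i k * ‖x i - b k‖ / 2) :=
        Finset.sum_le_sum fun i _ => Finset.sum_le_sum fun k _ => key i k
    _ = (∑ i, ∑ k, w i k * ‖x i - b' k‖ ^ 2 / (2 * ‖x i - b k‖))
        + ∑ i, ∑ k, w i k * ‖x i - b k‖ / 2 := by
        simp [Finset.sum_add_distrib]
    _ ≤ (∑ i, ∑ k, w i k * ‖x i - b k‖ ^ 2 / (2 * ‖x i - b k‖))
        + ∑ i, ∑ k, w i k * ‖x i - b k‖ / 2 := by linarith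
    _ = ∑ i, ∑ k, (w i k * ‖x i - b k‖ ^ 2 / (2 * ‖x i - b k‖) + w i k * ‖x i - b k‖ / 2) := by
        simp [Finset.sum_add_distrib]
    _ = ∑ i, ∑ k, w i k * ‖x i - b k‖ := by
        exact Finset.sum_congr rfl fun i _ => Finset.sum_congr rfl fun k _ => key2 i k
end

section
/- Let x_1, …, x_n ∈ ℝ^d, let b_1, …, b_c ∈ ℝ^d with x_i ≠ b_k for all i, k, and let w_{ik} ≥ 0 with Σ_{i=1}^n w_{ik}/(2‖x_i − b_k‖₂) > 0 for each k. Define the reweighted centroids b'_k = (Σ_{i=1}^n w_{ik} x_i/(2‖x_i − b_k‖₂)) / (Σ_{i=1}^n w_{ik}/(2‖x_i − b_k‖₂)). Then the robust objective does not increase: Σ_{i=1}^n Σ_{k=1}^c w_{ik} ‖x_i − b'_k‖₂ ≤ Σ_{i=1}^n Σ_{k=1}^c w_{ik} ‖x_i − b_k‖₂. -/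
open Finset RealInnerProductSpace

lemma quad_min {E : Type*} [NormedAddCommGroup E] [InnerProductSpace ℝ E] {n : ℕ}
    (cw : Fin n → ℝ) (hc : ∀ i, 0 ≤ cw i) (x : Fin n → E) (b b' : E)
    (hS : 0 < ∑ i, cw i) (hb' : b' = (∑ i, cw i)⁻¹ • ∑ i, cw i • x i) :
    ∑ i, cw i * ‖x i - b'‖ ^ 2 ≤ ∑ i, cw i * ‖x i - b‖ ^ 2 := by
  have hzero : ∑ i, cw i • (x i - b') = 0 := by
    have : (∑ i, cw i) • b' = ∑ i, cw i • x i := by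
      rw [hb', smul_smul, mul_inv_cancel₀ hS.ne', one_smul]
    simp [smul_sub, Finset.sum_sub_distrib, ← Finset.sum_smul, this]
  have key : ∑ i, cw i * ‖x i - b‖ ^ 2
      = (∑ i, cw i * ‖x i - b'‖ ^ 2) + (∑ i, cw i) * ‖b' - b‖ ^ 2 := by
    have expand : ∀ i, cw i * ‖x i - b‖ ^ 2
        = cw i * ‖x i - b'‖ ^ 2 + 2 * ⟪cw i • (x i - b'), b' - b⟫
          + cw i * ‖b' - b‖ ^ 2 := by
      intro i
      have h1 : x i - b = (x i - b') + (b' - b) := by abel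
      rw [h1, norm_add_sq_real, real_inner_smul_left]
      ring
    calc ∑ i, cw i * ‖x i - b‖ ^ 2
        = ∑ i, (cw i * ‖x i - b'‖ ^ 2 + 2 * ⟪cw i • (x i - b'), b' - b⟫
            + cw i * ‖b' - b‖ ^ 2) := by
          exact Finset.sum_congr rfl fun i _ => expand i
      _ = (∑ i, cw i * ‖x i - b'‖ ^ 2) + 2 * ⟪∑ i, cw i • (x i - b'), b' - b⟫
            + (∑ i, cw i) * ‖b' - b‖ ^ 2 := by
          rw [Finset.sum_add_distrib, Finset.sum_add_distrib, ← Finset.mul_sum,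
            ← Finset.sum_mul, ← sum_inner]
      _ = (∑ i, cw i * ‖x i - b'‖ ^ 2) + (∑ i, cw i) * ‖b' - b‖ ^ 2 := by
          rw [hzero]; simp
  rw [key]
  nlinarith [mul_nonneg hS.le (sq_nonneg ‖b' - b‖)]

/-- Inequality (24) of the paper: the iterative-reweighted centroid update does not increase
the robust objective `Σ_{i,k} w_{ik} ‖x_i − b_k‖`. -/
theorem reweighted_centroid_robust_descent (d n c : ℕ)
    (x : Fin n → EuclideanSpace ℝ (Fin d)) (b : Fin c → EuclideanSpace ℝ (Fin d))
    (hne : ∀ i k, x i ≠ b k)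
    (w : Fin n → Fin c → ℝ) (hw : ∀ i k, 0 ≤ w i k)
    (hpos : ∀ k, 0 < ∑ i, w i k / (2 * ‖x i - b k‖))
    (b' : Fin c → EuclideanSpace ℝ (Fin d))
    (hb' : ∀ k, b' k = (∑ i, w i k / (2 * ‖x i - b k‖))⁻¹ •
        ∑ i, (w i k / (2 * ‖x i - b k‖)) • x i) :
    ∑ i, ∑ k, w i k * ‖x i - b' k‖ ≤ ∑ i, ∑ k, w i k * ‖x i - b k‖ := by
  rw [Finset.sum_comm, Finset.sum_comm (s := Finset.univ) (t := Finset.univ)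
    (f := fun i k => w i k * ‖x i - b k‖)]
  apply Finset.sum_le_sum
  intro k _
  set cw : Fin n → ℝ := fun i => w i k / (2 * ‖x i - b k‖) with hcw
  have ha : ∀ i, (0:ℝ) < ‖x i - b k‖ := fun i => by
    rw [norm_pos_iff]; exact sub_ne_zero_of_ne (hne i k)
  have hcnn : ∀ i, 0 ≤ cw i := fun i =>
    div_nonneg (hw i k) (by positivity)
  have hmin := quad_min cw hcnn x (b k) (b' k) (hpos k) (hb' k)
  have step1 : ∀ i, w i k * ‖x i - b' k‖
      ≤ cw i * ‖x i - b' k‖ ^ 2 + w i k * ‖x i - b k‖ / 2 := by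
    intro i
    have hai := ha i
    have hwi := hw i k
    have h3 : w i k * ‖x i - b' k‖ ≤ w i k * ((‖x i - b' k‖ ^ 2 + ‖x i - b k‖ ^ 2) / (2 * ‖x i - b k‖)) := by
      apply mul_le_mul_of_nonneg_left _ hwi
      rw [le_div_iff₀ (by positivity)]
      nlinarith [sq_nonneg (‖x i - b' k‖ - ‖x i - b k‖)]
    refine h3.trans (le_of_eq ?_)
    simp only [hcw]
    field_simp
  have step2 : ∀ i, cw i * ‖x i - b k‖ ^ 2 + w i k * ‖x i - b k‖ / 2
      = w i k * ‖x i - b k‖ := by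
    intro i
    have hai := (ha i).ne'
    simp only [hcw]
    field_simp
    ring
  calc ∑ i, w i k * ‖x i - b' k‖
      ≤ ∑ i, (cw i * ‖x i - b' k‖ ^ 2 + w i k * ‖x i - b k‖ / 2) :=
        Finset.sum_le_sum fun i _ => step1 i
    _ ≤ ∑ i, (cw i * ‖x i - b k‖ ^ 2 + w i k * ‖x i - b k‖ / 2) := by
        rw [Finset.sum_add_distrib, Finset.sum_add_distrib]
        exact add_le_add hmin le_rfl
    _ = ∑ i, w i k * ‖x i - b k‖ :=
        Finset.sum_congr rfl fun i _ => step2 i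
end

section
/- Let x_1, …, x_n ∈ ℝ^d, let b_1, …, b_c ∈ ℝ^d with x_i ≠ b_k for all i, k, let r > 1, and let 1 ≤ K̃ ≤ c. Let α ∈ ℝ^{n×c} be any membership matrix each of whose rows α^i lies in the probability simplex Δ_c and has at most K̃ nonzero entries. Define α' row-wise by the closed-form solution: for each i, with h_{ik} = ‖x_i − b_k‖₂ and σ_i a permutation sorting k ↦ h_{ik} ascending, set α'_{i,σ_i(k)} = h_{i,σ_i(k)}^{1/(1−r)} / (Σ_{s=1}^{K̃} h_{i,σ_i(s)}^{1/(1−r)}) for k ≤ K̃ and α'_{i,σ_i(k)} = 0 for k > K̃. Define b'_k = (Σ_{i=1}^n (α'_{ik})^r x_i/(2‖x_i − b_k‖₂)) / (Σ_{i=1}^n (α'_{ik})^r/(2‖x_i − b_k‖₂)) whenever the denominator is positive, and b'_k = b_k otherwise. Then Σ_{i=1}^n Σ_{k=1}^c ‖x_i − b'_k‖₂ (α'_{ik})^r ≤ Σ_{i=1}^n Σ_{k=1}^c ‖x_i − b_k‖₂ (α_{ik})^r. -/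
open scoped Classical


lemma tangent_rpow {r : ℝ} (hr : 1 < r) {a b : ℝ} (ha : 0 ≤ a) (hb : 0 < b) :
    b ^ r + r * b ^ (r - 1) * (a - b) ≤ a ^ r := by
  have hs : (-1 : ℝ) ≤ a / b - 1 := by
    have : 0 ≤ a / b := div_nonneg ha hb.le
    linarith
  have h := one_add_mul_self_le_rpow_one_add hs hr.le
  have h2 : (1 + (a / b - 1)) ^ r = a ^ r / b ^ r := by
    rw [show 1 + (a / b - 1) = a / b by ring, Real.div_rpow ha hb.le]
  rw [h2] at h
  have hbr : 0 < b ^ r := Real.rpow_pos_of_pos hb r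
  have h3 : (1 + r * (a / b - 1)) * b ^ r ≤ a ^ r := by
    calc (1 + r * (a / b - 1)) * b ^ r ≤ (a ^ r / b ^ r) * b ^ r := by
          exact mul_le_mul_of_nonneg_right h hbr.le
      _ = a ^ r := by field_simp
  have hb1 : b ^ (r - 1) * b = b ^ r := by
    rw [← Real.rpow_add_one hb.ne' (r - 1)]; ring_nf
  have key : b ^ (r - 1) * (a - b) = (a / b - 1) * b ^ r := by
    rw [← hb1]; field_simp
  calc b ^ r + r * b ^ (r - 1) * (a - b) = (1 + r * (a / b - 1)) * b ^ r := by
        rw [show r * b ^ (r - 1) * (a - b) = r * ((a / b - 1) * b ^ r) by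
          rw [mul_assoc, key]]
        ring
    _ ≤ a ^ r := h3


lemma sum_subset_le_sum_first {c Kt : ℕ} (hKc : Kt ≤ c) (w : Fin c → ℝ)
    (hw : ∀ k l : Fin c, k ≤ l → w l ≤ w k) (hw0 : ∀ k, 0 ≤ w k)
    (A : Finset (Fin c)) (hA : A.card ≤ Kt) :
    ∑ s ∈ A, w s ≤ ∑ s ∈ Finset.univ.filter (fun s : Fin c => (s : ℕ) < Kt), w s := by
  classical
  have hmc : A.card ≤ c := hA.trans hKc
  set e := A.orderEmbOfFin rfl with he
  have hinj : Function.Injective (fun j : Fin A.card => e j) := e.injective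
  have himg : Finset.image (fun j : Fin A.card => e j) Finset.univ = A := by
    apply Finset.eq_of_subset_of_card_le
    · intro s hs
      simp only [Finset.mem_image] at hs
      obtain ⟨j, _, rfl⟩ := hs
      exact A.orderEmbOfFin_mem rfl j
    · rw [Finset.card_image_of_injective _ hinj, Finset.card_univ, Fintype.card_fin]
  have hsum : ∑ s ∈ A, w s = ∑ j : Fin A.card, w (e j) := by
    have h := Finset.sum_image (s := (Finset.univ : Finset (Fin A.card)))
      (f := w) (g := fun j : Fin A.card => e j) (fun x _ y _ h => hinj h)
    rw [himg] at h
    exact h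
  have hle : ∀ t : ℕ, ∀ ht : t < A.card, t ≤ (e ⟨t, ht⟩ : ℕ) := by
    intro t
    induction t with
    | zero => intro ht; exact Nat.zero_le _
    | succ s ih =>
      intro ht
      have hs : s < A.card := Nat.lt_of_succ_lt ht
      have h1 := ih hs
      have h2 : e ⟨s, hs⟩ < e ⟨s + 1, ht⟩ := e.strictMono (by simp [Fin.lt_def])
      rw [Fin.lt_def] at h2
      omega
  set g : Fin A.card → Fin c := fun j => ⟨(j : ℕ), lt_of_lt_of_le j.isLt hmc⟩ with hg
  have step1 : ∑ j : Fin A.card, w (e j) ≤ ∑ j : Fin A.card, w (g j) := by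
    apply Finset.sum_le_sum
    intro j _
    exact hw (g j) (e j) (by rw [Fin.le_def]; exact hle j j.isLt)
  have hginj : Function.Injective g := by
    intro a b hab
    simpa [hg, Fin.ext_iff] using congrArg Fin.val hab
  have himg2 : Finset.image g Finset.univ
      = Finset.univ.filter (fun s : Fin c => (s : ℕ) < A.card) := by
    ext s
    simp only [Finset.mem_image, Finset.mem_filter, Finset.mem_univ, true_and]
    constructor
    · rintro ⟨j, rfl⟩; exact j.isLt
    · intro hs
      exact ⟨⟨(s : ℕ), hs⟩, rfl⟩
  have step2 : ∑ j : Fin A.card, w (g j)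
      = ∑ s ∈ Finset.univ.filter (fun s : Fin c => (s : ℕ) < A.card), w s := by
    rw [← himg2, Finset.sum_image (fun x _ y _ h => hginj h)]
  have step3 : ∑ s ∈ Finset.univ.filter (fun s : Fin c => (s : ℕ) < A.card), w s
      ≤ ∑ s ∈ Finset.univ.filter (fun s : Fin c => (s : ℕ) < Kt), w s := by
    apply Finset.sum_le_sum_of_subset_of_nonneg
    · intro s hs
      simp only [Finset.mem_filter, Finset.mem_univ, true_and] at hs ⊢
      omega
    · intro s _ _; exact hw0 s
  calc ∑ s ∈ A, w s = ∑ j : Fin A.card, w (e j) := hsum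
    _ ≤ ∑ j : Fin A.card, w (g j) := step1
    _ = _ := step2
    _ ≤ _ := step3

lemma rowA {c Kt : ℕ} (hKc : Kt ≤ c) (hK1 : 1 ≤ Kt) {r : ℝ} (hr : 1 < r)
    (h : Fin c → ℝ) (hpos : ∀ k, 0 < h k)
    (σ : Equiv.Perm (Fin c)) (hsort : ∀ k l : Fin c, k ≤ l → h (σ k) ≤ h (σ l))
    (α : Fin c → ℝ) (hα0 : ∀ k, 0 ≤ α k) (hα1 : ∑ k, α k = 1)
    (hαK : (Finset.univ.filter (fun k => α k ≠ 0)).card ≤ Kt)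
    (α' : Fin c → ℝ)
    (hα' : ∀ j, α' j = if ((σ.symm j : ℕ) < Kt) then
        h j ^ (1 / (1 - r)) /
          ∑ s ∈ Finset.univ.filter (fun s : Fin c => (s : ℕ) < Kt), h (σ s) ^ (1 / (1 - r))
      else 0) :
    ∑ k, h k * (α' k) ^ r ≤ ∑ k, h k * (α k) ^ r := by
  classical
  have h1r : (1 : ℝ) - r ≠ 0 := by linarith
  set p : ℝ := 1 / (1 - r) with hp
  have hpneg : p < 0 := by
    rw [hp]; apply div_neg_of_pos_of_neg one_pos; linarith
  set v : Fin c → ℝ := fun k => h k ^ p with hv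
  have hvpos : ∀ k, 0 < v k := fun k => Real.rpow_pos_of_pos (hpos k) p
  set B : Finset (Fin c) := Finset.univ.filter (fun s : Fin c => (s : ℕ) < Kt) with hB
  set T : ℝ := ∑ s ∈ B, v (σ s) with hT
  have hc : 0 < c := lt_of_lt_of_le hK1 hKc
  have hBne : B.Nonempty := by
    refine ⟨⟨0, hc⟩, ?_⟩
    simp only [hB, Finset.mem_filter, Finset.mem_univ, true_and]
    omega
  have hTpos : 0 < T := Finset.sum_pos (fun s _ => hvpos (σ s)) hBne
  have hkey : ∀ (k : Fin c) (t : ℝ), 0 < t → h k * (v k / t) ^ r = v k / t ^ r := by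
    intro k t ht
    simp only [hv]
    rw [Real.div_rpow (Real.rpow_pos_of_pos (hpos k) p).le ht.le,
      ← Real.rpow_mul (hpos k).le, ← mul_div_assoc]
    congr 1
    rw [show h k * h k ^ (p * r) = h k ^ (1 + p * r) by
      rw [Real.rpow_add (hpos k), Real.rpow_one]]
    congr 1
    rw [hp]; field_simp; ring
  -- value at α'
  have hval : ∑ k, h k * (α' k) ^ r = T ^ (1 - r) := by
    have hre : ∑ k, h k * (α' k) ^ r = ∑ s, h (σ s) * (α' (σ s)) ^ r :=
      (Equiv.sum_comp σ (fun k => h k * (α' k) ^ r)).symm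
    rw [hre]
    have hterm : ∀ s : Fin c, h (σ s) * (α' (σ s)) ^ r
        = if (s : ℕ) < Kt then v (σ s) / T ^ r else 0 := by
      intro s
      rw [hα' (σ s), Equiv.symm_apply_apply]
      by_cases hs : (s : ℕ) < Kt
      · simp only [hs, if_true]
        exact hkey (σ s) T hTpos
      · simp [hs, Real.zero_rpow (by positivity : r ≠ 0)]
    rw [Finset.sum_congr rfl (fun s _ => hterm s), Finset.sum_ite, Finset.sum_const_zero,
      add_zero, ← Finset.sum_div, Real.rpow_sub hTpos, Real.rpow_one]
  -- lower bound at α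
  set S : Finset (Fin c) := Finset.univ.filter (fun k => α k ≠ 0) with hS
  have hSne : S.Nonempty := by
    by_contra hemp
    rw [Finset.not_nonempty_iff_eq_empty] at hemp
    have hz : ∀ k, α k = 0 := by
      intro k
      by_contra hk
      have hmem : k ∈ S := by simp [hS, hk]
      simp [hemp] at hmem
    simp [hz] at hα1
  set TS : ℝ := ∑ k ∈ S, v k with hTS
  have hTSpos : 0 < TS := Finset.sum_pos (fun k _ => hvpos k) hSne
  set β : Fin c → ℝ := fun k => v k / TS with hβ
  have hβpos : ∀ k, 0 < β k := fun k => div_pos (hvpos k) hTSpos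
  have hsumS : ∑ k ∈ S, α k = 1 := by
    rw [← hα1]
    apply Finset.sum_subset (Finset.subset_univ S)
    intro k _ hk
    simp only [hS, Finset.mem_filter, Finset.mem_univ, true_and, not_not] at hk
    exact hk
  have hsumβ : ∑ k ∈ S, β k = 1 := by
    simp only [hβ]
    rw [← Finset.sum_div, div_self hTSpos.ne']
  have hβterm : ∀ k : Fin c, h k * β k ^ (r - 1) = TS ^ (1 - r) := by
    intro k
    simp only [hβ, hv]
    rw [Real.div_rpow (Real.rpow_pos_of_pos (hpos k) p).le hTSpos.le,
      ← Real.rpow_mul (hpos k).le,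
      show p * (r - 1) = -1 by rw [hp]; field_simp; ring,
      Real.rpow_neg_one,
      show (1 : ℝ) - r = -(r - 1) by ring, Real.rpow_neg hTSpos.le]
    rw [eq_comm, inv_eq_iff_eq_inv, eq_comm]
    field_simp
    exact div_self (hpos k).ne'
  -- tangent bound on support
  have htan : ∀ k ∈ S, v k / TS ^ r + TS ^ (1 - r) * (α k - β k) * r
      ≤ h k * α k ^ r := by
    intro k _
    have := tangent_rpow hr (hα0 k) (hβpos k)
    have h2 := mul_le_mul_of_nonneg_left this (hpos k).le
    calc v k / TS ^ r + TS ^ (1 - r) * (α k - β k) * r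
        = h k * β k ^ r + h k * (r * β k ^ (r - 1) * (α k - β k)) := by
          rw [show h k * (r * β k ^ (r - 1) * (α k - β k))
              = (h k * β k ^ (r - 1)) * (α k - β k) * r by ring, hβterm k,
            show h k * β k ^ r = v k / TS ^ r from hkey k TS hTSpos]
      _ ≤ h k * α k ^ r := by rw [mul_add] at h2; exact h2
  have hsum_lb : TS ^ (1 - r) ≤ ∑ k, h k * α k ^ r := by
    have hres : ∑ k, h k * α k ^ r = ∑ k ∈ S, h k * α k ^ r := by
      rw [eq_comm]
      apply Finset.sum_subset (Finset.subset_univ S)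
      intro k _ hk
      simp only [hS, Finset.mem_filter, Finset.mem_univ, true_and, not_not] at hk
      rw [hk, Real.zero_rpow (by positivity : r ≠ 0), mul_zero]
    rw [hres]
    have := Finset.sum_le_sum htan
    rw [Finset.sum_add_distrib, ← Finset.sum_div, ← hTS] at this
    have hzero : ∑ k ∈ S, TS ^ (1 - r) * (α k - β k) * r = 0 := by
      have heq : ∑ k ∈ S, TS ^ (1 - r) * (α k - β k) * r
          = (∑ k ∈ S, (α k - β k)) * (TS ^ (1 - r) * r) := by
        rw [Finset.sum_mul]
        exact Finset.sum_congr rfl (fun k _ => by ring)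
      rw [heq, Finset.sum_sub_distrib, hsumS, hsumβ, sub_self, zero_mul]
    rw [hzero, add_zero] at this
    rw [Real.rpow_sub hTSpos, Real.rpow_one]
    exact this
  -- TS ≤ T
  have hTle : TS ≤ T := by
    have hw : ∀ k l : Fin c, k ≤ l → v (σ l) ≤ v (σ k) := fun k l hkl =>
      Real.rpow_le_rpow_of_nonpos (hpos (σ k)) (hsort k l hkl) hpneg.le
    have hcard : (S.image σ.symm).card ≤ Kt := by
      rw [Finset.card_image_of_injective _ σ.symm.injective]; exact hαK
    have := sum_subset_le_sum_first hKc (fun s => v (σ s)) hw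
      (fun k => (hvpos _).le) (S.image σ.symm) hcard
    rw [Finset.sum_image (fun x _ y _ hxy => σ.symm.injective hxy)] at this
    simp only [Equiv.apply_symm_apply] at this
    exact this
  have hTfin : T ^ (1 - r) ≤ TS ^ (1 - r) :=
    Real.rpow_le_rpow_of_nonpos hTSpos hTle (by linarith)
  rw [hval]
  exact hTfin.trans hsum_lb


lemma colB {d n : ℕ} (x : Fin n → EuclideanSpace ℝ (Fin d)) (bk : EuclideanSpace ℝ (Fin d))
    (hne : ∀ i, x i ≠ bk) (r : ℝ) (a : Fin n → ℝ) (ha : ∀ i, 0 ≤ a i)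
    (b' : EuclideanSpace ℝ (Fin d))
    (hb' : b' = if 0 < ∑ i, (a i) ^ r / (2 * ‖x i - bk‖) then
        (∑ i, (a i) ^ r / (2 * ‖x i - bk‖))⁻¹ •
          ∑ i, ((a i) ^ r / (2 * ‖x i - bk‖)) • x i
      else bk) :
    ∑ i, ‖x i - b'‖ * (a i) ^ r ≤ ∑ i, ‖x i - bk‖ * (a i) ^ r := by
  classical
  set h : Fin n → ℝ := fun i => ‖x i - bk‖ with hh
  have hhpos : ∀ i, 0 < h i := fun i => by
    simp only [hh, norm_pos_iff]; exact sub_ne_zero_of_ne (hne i)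
  set w : Fin n → ℝ := fun i => (a i) ^ r / (2 * h i) with hw
  have hw0 : ∀ i, 0 ≤ w i := fun i =>
    div_nonneg (Real.rpow_nonneg (ha i) r) (by positivity)
  set W : ℝ := ∑ i, w i with hW
  by_cases hWP : 0 < W
  · have hb'' : b' = W⁻¹ • ∑ i, w i • x i := by rw [hb']; simp only [if_pos hWP]; rfl
    have hcenter : ∑ i, w i • (x i - b') = 0 := by
      simp only [smul_sub]
      rw [Finset.sum_sub_distrib, ← Finset.sum_smul, ← hW, hb'', smul_smul,
        mul_inv_cancel₀ hWP.ne', one_smul, sub_self]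
    -- weighted least squares
    have hls : ∑ i, w i * ‖x i - b'‖ ^ 2 ≤ ∑ i, w i * ‖x i - bk‖ ^ 2 := by
      have hexp : ∀ i, ‖x i - bk‖ ^ 2
          = ‖x i - b'‖ ^ 2 + 2 * inner ℝ (x i - b') (b' - bk) + ‖b' - bk‖ ^ 2 := by
        intro i
        rw [show x i - bk = (x i - b') + (b' - bk) by abel]
        exact norm_add_sq_real _ _
      have hcross : ∑ i, w i * inner ℝ (x i - b') (b' - bk) = (0 : ℝ) := by
        have : ∑ i, w i * inner ℝ (x i - b') (b' - bk)
            = inner ℝ (∑ i, w i • (x i - b')) (b' - bk) := by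
          rw [sum_inner]
          exact Finset.sum_congr rfl (fun i _ => (real_inner_smul_left _ _ _).symm)
        rw [this, hcenter, inner_zero_left]
      calc ∑ i, w i * ‖x i - b'‖ ^ 2
          ≤ ∑ i, w i * ‖x i - b'‖ ^ 2 + (2 * ∑ i, w i * inner ℝ (x i - b') (b' - bk)
              + (∑ i, w i) * ‖b' - bk‖ ^ 2) := by
            rw [hcross]
            have : 0 ≤ (∑ i, w i) * ‖b' - bk‖ ^ 2 := by positivity
            linarith
        _ = ∑ i, w i * ‖x i - bk‖ ^ 2 := by
            rw [Finset.sum_mul, Finset.mul_sum, ← Finset.sum_add_distrib,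
              ← Finset.sum_add_distrib]
            exact Finset.sum_congr rfl (fun i _ => by rw [hexp i]; ring)
    -- per-term AM-GM
    have hamgm : ∀ i, ‖x i - b'‖ * (a i) ^ r
        ≤ w i * ‖x i - b'‖ ^ 2 + (a i) ^ r * h i / 2 := by
      intro i
      have hhi := hhpos i
      have har : (0 : ℝ) ≤ (a i) ^ r := Real.rpow_nonneg (ha i) r
      have hnn : (0 : ℝ) ≤ ‖x i - b'‖ := norm_nonneg _
      have hsq : 0 ≤ (‖x i - b'‖ - h i) ^ 2 := sq_nonneg _
      have key : 2 * h i * ‖x i - b'‖ ≤ ‖x i - b'‖ ^ 2 + h i ^ 2 := by nlinarith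
      rw [hw]
      simp only
      rw [div_mul_eq_mul_div, ← sub_nonneg]
      have : (a i) ^ r * ‖x i - b'‖ ^ 2 / (2 * h i) + a i ^ r * h i / 2
          - ‖x i - b'‖ * a i ^ r
          = (a i ^ r) * ((‖x i - b'‖ - h i) ^ 2) / (2 * h i) := by
        field_simp
        ring
      rw [this]
      positivity
    have hwnorm : ∀ i, w i * ‖x i - bk‖ ^ 2 = (a i) ^ r * h i / 2 := by
      intro i
      have hne0 : h i ≠ 0 := (hhpos i).ne'
      have e1 : ‖x i - bk‖ = h i := rfl
      rw [hw]
      simp only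
      rw [e1]
      field_simp
    calc ∑ i, ‖x i - b'‖ * (a i) ^ r
        ≤ ∑ i, (w i * ‖x i - b'‖ ^ 2 + (a i) ^ r * h i / 2) :=
          Finset.sum_le_sum (fun i _ => hamgm i)
      _ = ∑ i, w i * ‖x i - b'‖ ^ 2 + ∑ i, (a i) ^ r * h i / 2 :=
          Finset.sum_add_distrib
      _ ≤ ∑ i, w i * ‖x i - bk‖ ^ 2 + ∑ i, (a i) ^ r * h i / 2 := by linarith [hls]
      _ = ∑ i, (a i) ^ r * h i / 2 + ∑ i, (a i) ^ r * h i / 2 := by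
          rw [Finset.sum_congr rfl (fun i _ => hwnorm i)]
      _ = ∑ i, ‖x i - bk‖ * (a i) ^ r := by
          rw [← Finset.sum_add_distrib]
          exact Finset.sum_congr rfl (fun i _ => by rw [hh]; ring)
  · have hb'' : b' = bk := by rw [hb']; simp only [if_neg hWP]
    rw [hb'']

/-- Theorem 1 of the paper: one full alternating iteration of REFCMFS (membership update via
the closed-form solution (16), followed by the iterative-reweighted centroid update (20)–(21))
monotonically decreases the objective `Σ_{i,k} ‖x_i − b_k‖ α_{ik}^r` over membership matrices
whose rows lie in the probability simplex with at most `K̃` nonzero entries. -/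
theorem refcmfs_alternating_iteration_descent (d n c : ℕ) (hc : 1 ≤ c)
    (x : Fin n → EuclideanSpace ℝ (Fin d)) (b : Fin c → EuclideanSpace ℝ (Fin d))
    (hne : ∀ i k, x i ≠ b k)
    (r : ℝ) (hr : 1 < r) (Kt : ℕ) (hK1 : 1 ≤ Kt) (hKc : Kt ≤ c)
    (α : Fin n → Fin c → ℝ)
    (hα0 : ∀ i k, 0 ≤ α i k) (hα1 : ∀ i, ∑ k, α i k = 1)
    (hαK : ∀ i, (Finset.univ.filter (fun k : Fin c => α i k ≠ 0)).card ≤ Kt)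
    (σ : Fin n → Equiv.Perm (Fin c))
    (hsort : ∀ i, ∀ k l : Fin c, k ≤ l → ‖x i - b (σ i k)‖ ≤ ‖x i - b (σ i l)‖)
    (α' : Fin n → Fin c → ℝ)
    (hα' : ∀ i, ∀ j : Fin c, α' i j =
      if (((σ i).symm j : ℕ) < Kt) then
        ‖x i - b j‖ ^ (1 / (1 - r)) /
          ∑ s ∈ Finset.univ.filter (fun s : Fin c => (s : ℕ) < Kt),
            ‖x i - b (σ i s)‖ ^ (1 / (1 - r))
      else 0)
    (b' : Fin c → EuclideanSpace ℝ (Fin d))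
    (hb' : ∀ k, b' k =
      if 0 < ∑ i, (α' i k) ^ r / (2 * ‖x i - b k‖) then
        (∑ i, (α' i k) ^ r / (2 * ‖x i - b k‖))⁻¹ •
          ∑ i, ((α' i k) ^ r / (2 * ‖x i - b k‖)) • x i
      else b k) :
    ∑ i, ∑ k, ‖x i - b' k‖ * (α' i k) ^ r
      ≤ ∑ i, ∑ k, ‖x i - b k‖ * (α i k) ^ r := by
  have hα'0 : ∀ i k, 0 ≤ α' i k := by
    intro i k
    rw [hα' i k]
    split
    · exact div_nonneg (Real.rpow_nonneg (norm_nonneg _) _)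
        (Finset.sum_nonneg (fun s _ => Real.rpow_nonneg (norm_nonneg _) _))
    · exact le_refl 0
  calc ∑ i, ∑ k, ‖x i - b' k‖ * (α' i k) ^ r
      = ∑ k, ∑ i, ‖x i - b' k‖ * (α' i k) ^ r := Finset.sum_comm
    _ ≤ ∑ k, ∑ i, ‖x i - b k‖ * (α' i k) ^ r := by
        apply Finset.sum_le_sum
        intro k _
        exact colB x (b k) (fun i => hne i k) r (fun i => α' i k)
          (fun i => hα'0 i k) (b' k) (hb' k)
    _ = ∑ i, ∑ k, ‖x i - b k‖ * (α' i k) ^ r := Finset.sum_comm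
    _ ≤ ∑ i, ∑ k, ‖x i - b k‖ * (α i k) ^ r := by
        apply Finset.sum_le_sum
        intro i _
        exact rowA hKc hK1 hr (fun k => ‖x i - b k‖)
          (fun k => norm_sub_pos_iff.mpr (hne i k)) (σ i) (hsort i)
          (α i) (hα0 i) (hα1 i) (hαK i) (α' i) (hα' i)
end
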